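/- Fix d ≥ 1, n ≥ 1, σ > 0, C_K > 0, R_f > 0, c_0 > 0, ε, δ ∈ (0,1), a query point x_0 ∈ ℝ^d, and a measurable kernel K_σ : ℝ^d × ℝ^d → ℝ with |K_σ(x,x')| ≤ σ^{−d}·C_K. Let Z = ℝ^d × [−R_f, R_f]. For a dataset X ∈ Z^n define d_σ(x_0,X) = Σ_j K_σ(x_0, x_j), define θ̂(X) = Π_{R_f}( Σ_j K_σ(x_0,x_j) y_j / d_σ(x_0,X) ) when d_σ(x_0,X) ≠ 0 and θ̂(X) = 0 otherwise, where Π_{R_f}(t) = (R_f/max(|t|,R_f))·t; define γ(X) = (σ^d/(2C_K))·max( d_σ(x_0,X) − c_0·n − 2σ^{−d}C_K, 0 ); and set α = 8 R_f C_K/(σ^d c_0 n). Then for any probability measure π_⊥ on ℝ, the ePTR mechanism built from (ε, δ, α, θ̂, γ, π_⊥) is (ε,δ)-differentially private. -/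

import Mathlib

open MeasureTheory ProbabilityTheory Matrix
open scoped Classical NNReal ENNReal RealInnerProductSpace

noncomputable section

namespace EPTR

variable {Z : Type*}

/-- Hamming distance between two datasets of size `n`. -/
def hDist {n : ℕ} (X X' : Fin n → Z) : ℕ :=
  (Finset.univ.filter fun i => X i ≠ X' i).card

/-- Two datasets are neighbors if they differ in exactly one coordinate. -/
def Neighbor {n : ℕ} (X X' : Fin n → Z) : Prop := hDist X X' = 1

/-- Gaussian measure on Euclidean space with mean `m` and covariance `v • I`
(the product of one-dimensional Gaussians of variance `v`). -/
def gaussianE {ι : Type*} [Fintype ι] (m : EuclideanSpace ℝ ι) (v : ℝ≥0) :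
    Measure (EuclideanSpace ℝ ι) :=
  (Measure.pi fun i => gaussianReal (m i) v).map (MeasurableEquiv.toLp 2 (ι → ℝ))

/-- The threshold shift `M = 1 + (2/ε) log (max (1/δ) (1/ε))` of the ePTR mechanism. -/
def Mshift (ε δ : ℝ) : ℝ := 1 + 2 / ε * Real.log (max (1 / δ) (1 / ε))

/-- The release probability of the ePTR mechanism at sub-distance value `g`. -/
def relProb (ε δ g : ℝ) : ℝ :=
  Real.exp (ε * (g - Mshift ε δ) / 2) / (Real.exp (ε * (g - Mshift ε δ) / 2) + 1)

/-- The standard deviation `s = (2α/ε)√(2 log(1.25/δ))` of the ePTR Gaussian noise. -/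
def noiseSD (ε δ α : ℝ) : ℝ := 2 * α / ε * Real.sqrt (2 * Real.log (1.25 / δ))

/-- Output distribution of the ePTR mechanism on input dataset `X`
(Euclidean-space valued version). -/
def ePTR {n : ℕ} {ι : Type*} [Fintype ι] (ε δ α : ℝ)
    (θhat : (Fin n → Z) → EuclideanSpace ℝ ι) (γ : (Fin n → Z) → ℝ)
    (πbot : Measure (EuclideanSpace ℝ ι)) (X : Fin n → Z) :
    Measure (EuclideanSpace ℝ ι) :=
  ENNReal.ofReal (relProb ε δ (γ X)) • gaussianE (θhat X) (Real.toNNReal (noiseSD ε δ α ^ 2))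
    + ENNReal.ofReal (1 - relProb ε δ (γ X)) • πbot

/-- Output distribution of the ePTR mechanism on input dataset `X` (real valued version). -/
def ePTR1 {n : ℕ} (ε δ α : ℝ)
    (θhat : (Fin n → Z) → ℝ) (γ : (Fin n → Z) → ℝ)
    (πbot : Measure ℝ) (X : Fin n → Z) : Measure ℝ :=
  ENNReal.ofReal (relProb ε δ (γ X)) • gaussianReal (θhat X) (Real.toNNReal (noiseSD ε δ α ^ 2))
    + ENNReal.ofReal (1 - relProb ε δ (γ X)) • πbot

/-- `(ε, δ)`-differential privacy of a mechanism: for all neighboring datasets `X, X'`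
and all measurable events `B`, `μ_X(B) ≤ e^ε μ_{X'}(B) + δ`. -/
def IsDP {n : ℕ} {Ω : Type*} [MeasurableSpace Ω]
    (mech : (Fin n → Z) → Measure Ω) (ε δ : ℝ) : Prop :=
  ∀ X X' : Fin n → Z, Neighbor X X' → ∀ B : Set Ω, MeasurableSet B →
    mech X B ≤ ENNReal.ofReal (Real.exp ε) * mech X' B + ENNReal.ofReal δ

/-- Projection onto the closed ball of radius `a` in a normed space:
`proj a v = (a / max ‖v‖ a) • v`. -/
def proj {V : Type*} [NormedAddCommGroup V] [Module ℝ V] (a : ℝ) (v : V) : V :=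
  (a / max ‖v‖ a) • v

/-- Identification of `Fin p → ℝ` with Euclidean space. -/
def toE {p : ℕ} : (Fin p → ℝ) → EuclideanSpace ℝ (Fin p) :=
  ⇑(EuclideanSpace.equiv (Fin p) ℝ).symm

/-- ℓ²-operator norm of a square matrix. -/
def opNorm {p : ℕ} (A : Matrix (Fin p) (Fin p) ℝ) : ℝ :=
  ‖Matrix.toEuclideanCLM (𝕜 := ℝ) A‖

/-- Smallest eigenvalue of a (symmetric) matrix, via the Rayleigh quotient. -/
def lambdaMin {p : ℕ} (A : Matrix (Fin p) (Fin p) ℝ) : ℝ :=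
  ⨅ v : Metric.sphere (0 : EuclideanSpace ℝ (Fin p)) 1,
    ⟪Matrix.toEuclideanCLM (𝕜 := ℝ) A v.1, v.1⟫

/-- Index set of data points carrying label `k`. -/
def Ik {n K : ℕ} {E : Type*} (X : Fin n → E × Fin K) (k : Fin K) : Finset (Fin n) :=
  Finset.univ.filter fun j => (X j).2 = k

/-- Class-`k` sample frequency `μ̂_k = |I_k| / n`. -/
def classFreq {n K : ℕ} {E : Type*} (X : Fin n → E × Fin K) (k : Fin K) : ℝ :=
  (Ik X k).card / n

/-- Class-`k` sample mean (equal to `0` if the class is empty). -/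
def classMean {n K p : ℕ} (X : Fin n → EuclideanSpace ℝ (Fin p) × Fin K) (k : Fin K) :
    EuclideanSpace ℝ (Fin p) :=
  ((Ik X k).card : ℝ)⁻¹ • ∑ j ∈ Ik X k, (X j).1

/-- The sub-distance of the ePTR Bayes classifier:
`γ(X) = max(min_k |I_k(X)| - c₀ n - 1, 0)`. -/
def gammaBC {n K : ℕ} {E : Type*} (c0 : ℝ) (X : Fin n → E × Fin K) : ℝ :=
  max (((⨅ k : Fin K, (Ik X k).card : ℕ) : ℝ) - c0 * n - 1) 0

end EPTR


namespace EPTRAux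
open MeasureTheory ProbabilityTheory Real
open scoped ENNReal NNReal


/-- sigmoid log-Lipschitz bound -/
lemma sigmoid_ratio {a a' c : ℝ} (hc : 0 ≤ c) (h : a ≤ a' + c) :
    exp a / (exp a + 1) ≤ exp c * (exp a' / (exp a' + 1)) := by
  rw [mul_div_assoc']
  rw [div_le_div_iff₀ (by positivity) (by positivity)]
  have h1 : exp a * (exp a' + 1) = exp (a + a') + exp a := by rw [exp_add]; ring
  have h2 : exp c * exp a' * (exp a + 1) = exp (c + (a' + a)) + exp (c + a') := by
    rw [exp_add, exp_add, exp_add]; ring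
  have k1 : exp (a + a') ≤ exp (c + (a' + a)) := exp_le_exp.mpr (by linarith)
  have k2 : exp a ≤ exp (c + a') := exp_le_exp.mpr (by linarith)
  linarith

lemma relProb_nonneg (ε δ g : ℝ) : 0 ≤ EPTR.relProb ε δ g := by
  unfold EPTR.relProb; positivity

lemma relProb_le_one (ε δ g : ℝ) : EPTR.relProb ε δ g ≤ 1 := by
  unfold EPTR.relProb
  rw [div_le_one (by positivity)]; linarith [exp_pos (ε * (g - EPTR.Mshift ε δ) / 2)]

lemma one_sub_relProb (ε δ g : ℝ) :
    1 - EPTR.relProb ε δ g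
      = exp (-(ε * (g - EPTR.Mshift ε δ) / 2)) / (exp (-(ε * (g - EPTR.Mshift ε δ) / 2)) + 1) := by
  unfold EPTR.relProb
  rw [Real.exp_neg]
  have h1 : exp (ε * (g - EPTR.Mshift ε δ) / 2) > 0 := exp_pos _
  field_simp
  ring

lemma relProb_le_mul {ε δ g g' : ℝ} (hε : 0 ≤ ε) (h : g - g' ≤ 1) :
    EPTR.relProb ε δ g ≤ exp (ε / 2) * EPTR.relProb ε δ g' := by
  unfold EPTR.relProb
  exact sigmoid_ratio (by positivity) (by nlinarith)

lemma one_sub_relProb_le_mul {ε δ g g' : ℝ} (hε : 0 ≤ ε) (h : g' - g ≤ 1) :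
    1 - EPTR.relProb ε δ g ≤ exp (ε / 2) * (1 - EPTR.relProb ε δ g') := by
  rw [one_sub_relProb, one_sub_relProb]
  exact sigmoid_ratio (by positivity) (by nlinarith)

lemma relProb_zero_le {ε δ : ℝ} (hε : ε ∈ Set.Ioo (0:ℝ) 1) (hδ : δ ∈ Set.Ioo (0:ℝ) 1) :
    EPTR.relProb ε δ 0 ≤ δ := by
  obtain ⟨hε0, hε1⟩ := hε
  obtain ⟨hδ0, hδ1⟩ := hδ
  unfold EPTR.relProb
  have h1 : exp (ε * (0 - EPTR.Mshift ε δ) / 2) ≤ δ := by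
    have hM : ε * (0 - EPTR.Mshift ε δ) / 2 ≤ Real.log δ := by
      unfold EPTR.Mshift
      have hmax : Real.log (1/δ) ≤ Real.log (max (1/δ) (1/ε)) :=
        Real.log_le_log (by positivity) (le_max_left _ _)
      have hlogδ : Real.log (1/δ) = - Real.log δ := by
        rw [one_div, Real.log_inv]
      have : ε * (0 - (1 + 2/ε * Real.log (max (1/δ) (1/ε)))) / 2
          = -ε/2 - Real.log (max (1/δ) (1/ε)) := by
        field_simp
        ring
      rw [this]
      nlinarith [hmax, hlogδ]
    calc exp (ε * (0 - EPTR.Mshift ε δ) / 2) ≤ exp (Real.log δ) := exp_le_exp.mpr hM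
      _ = δ := Real.exp_log hδ0
  have h2 : exp (ε * (0 - EPTR.Mshift ε δ) / 2) / (exp (ε * (0 - EPTR.Mshift ε δ) / 2) + 1)
      ≤ exp (ε * (0 - EPTR.Mshift ε δ) / 2) := by
    apply div_le_self (le_of_lt (exp_pos _))
    linarith [exp_pos (ε * (0 - EPTR.Mshift ε δ) / 2)]
  linarith

/-! ### proj lemmas -/

lemma proj_eq {a : ℝ} (ha : 0 < a) (t : ℝ) :
    EPTR.proj a t = max (-a) (min a t) := by
  unfold EPTR.proj
  rw [Real.norm_eq_abs, smul_eq_mul]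
  rcases le_total |t| a with h | h
  · obtain ⟨h1, h2⟩ := abs_le.mp h
    rw [max_eq_right h, div_self ha.ne', one_mul, min_eq_right h2, max_eq_right h1]
  · rw [max_eq_left h]
    rcases lt_trichotomy t 0 with ht | ht | ht
    · rw [abs_of_neg ht] at h ⊢
      have htne : t ≠ 0 := ht.ne
      have h1 : t ≤ -a := by linarith
      rw [min_eq_right (by linarith : t ≤ a), max_eq_left h1]
      rw [div_neg, neg_mul, div_mul_cancel₀ _ htne]
    · exfalso; rw [ht, abs_zero] at h; linarith
    · rw [abs_of_pos ht] at h ⊢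
      rw [div_mul_cancel₀ _ ht.ne', min_eq_left h, max_eq_right (by linarith : -a ≤ a)]

lemma proj_lipschitz {a : ℝ} (ha : 0 < a) (s t : ℝ) :
    |EPTR.proj a s - EPTR.proj a t| ≤ |s - t| := by
  rw [proj_eq ha, proj_eq ha]
  calc |max (-a) (min a s) - max (-a) (min a t)| ≤ max |(-a) - (-a)| |min a s - min a t| :=
        abs_max_sub_max_le_max _ _ _ _
    _ ≤ |s - t| := by
        rw [sub_self, abs_zero]
        apply max_le (abs_nonneg _)
        calc |min a s - min a t| ≤ max |a - a| |s - t| := abs_min_sub_min_le_max _ _ _ _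
          _ ≤ |s - t| := by rw [sub_self, abs_zero]; exact max_le (abs_nonneg _) le_rfl

lemma proj_of_le {a t : ℝ} (ha : 0 < a) (h : a ≤ t) : EPTR.proj a t = a := by
  rw [proj_eq ha, min_eq_left h, max_eq_right (by linarith)]

lemma proj_of_ge {a t : ℝ} (ha : 0 < a) (h : t ≤ -a) : EPTR.proj a t = -a := by
  rw [proj_eq ha, min_eq_right (by linarith), max_eq_left h]

/-- Sensitivity of the clipped Nadaraya–Watson estimator. -/
lemma nw_sens {A A' D D' Rf b c : ℝ} (hRf : 0 < Rf) (hb : 0 < b) (hc : 0 < c)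
    (hA : |A - A'| ≤ Rf * b) (hD : |D - D'| ≤ b) (hDc : c + b ≤ D) :
    |EPTR.proj Rf (A / D) - EPTR.proj Rf (A' / D')| ≤ 4 * Rf * b / c := by
  obtain ⟨hD1, hD2⟩ := abs_le.mp hD
  obtain ⟨hA1, hA2⟩ := abs_le.mp hA
  have hD0 : 0 < D := by linarith
  have hD'0 : 0 < D' := by linarith
  have hD'c : c ≤ D' := by linarith
  by_cases h1 : |A / D| ≤ 2 * Rf
  · calc |EPTR.proj Rf (A / D) - EPTR.proj Rf (A' / D')| ≤ |A / D - A' / D'| :=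
        proj_lipschitz hRf _ _
      _ ≤ 3 * Rf * b / c := by
          have heq : A / D - A' / D' = ((A / D) * (D' - D) + (A - A')) / D' := by
            field_simp; ring
          rw [heq, abs_div, abs_of_pos hD'0]
          apply div_le_div₀ (by positivity) ?_ hc hD'c
          calc |(A / D) * (D' - D) + (A - A')| ≤ |A / D| * |D' - D| + |A - A'| := by
                refine (abs_add_le _ _).trans ?_
                rw [abs_mul]
            _ ≤ 2 * Rf * b + Rf * b := by
                have h3 : |D' - D| ≤ b := by rw [abs_sub_comm]; exact hD
                gcongr
            _ = 3 * Rf * b := by ring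
      _ ≤ 4 * Rf * b / c := by gcongr; linarith
  · by_cases h2 : |A' / D'| ≤ 2 * Rf
    · calc |EPTR.proj Rf (A / D) - EPTR.proj Rf (A' / D')| ≤ |A / D - A' / D'| :=
          proj_lipschitz hRf _ _
        _ ≤ 3 * Rf * b / c := by
            have heq : A / D - A' / D' = ((A' / D') * (D' - D) + (A - A')) / D := by
              field_simp; ring
            rw [heq, abs_div, abs_of_pos hD0]
            apply div_le_div₀ (by positivity) ?_ hc (by linarith)
            calc |(A' / D') * (D' - D) + (A - A')| ≤ |A' / D'| * |D' - D| + |A - A'| := by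
                  refine (abs_add_le _ _).trans ?_
                  rw [abs_mul]
              _ ≤ 2 * Rf * b + Rf * b := by
                  have h3 : |D' - D| ≤ b := by rw [abs_sub_comm]; exact hD
                  gcongr
              _ = 3 * Rf * b := by ring
        _ ≤ 4 * Rf * b / c := by gcongr; linarith
    · push_neg at h1 h2
      rcases lt_abs.mp h1 with ht | ht <;> rcases lt_abs.mp h2 with ht' | ht'
      · -- both large positive
        rw [proj_of_le hRf (by linarith), proj_of_le hRf (by linarith), sub_self, abs_zero]
        positivity
      · -- t > 2Rf, t' < -2Rf : contradiction
        exfalso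
        have hAt : 2 * Rf * D < A := by
          have := (lt_div_iff₀ hD0).mp ht; linarith
        have hAt' : A' < -(2 * Rf) * D' := by
          have : 2 * Rf < -(A'/D') := ht'
          have := (lt_div_iff₀ hD'0).mp (by linarith [(neg_div D' A').symm] : 2*Rf < -A'/D')
          linarith
        nlinarith
      · -- t < -2Rf, t' > 2Rf : contradiction
        exfalso
        have hAt : A < -(2 * Rf) * D := by
          have : 2 * Rf < -(A/D) := ht
          have := (lt_div_iff₀ hD0).mp (by linarith [(neg_div D A).symm] : 2*Rf < -A/D)
          linarith
        have hAt' : 2 * Rf * D' < A' := by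
          have := (lt_div_iff₀ hD'0).mp ht'; linarith
        nlinarith
      · -- both large negative
        have g1 : A / D ≤ -Rf := by nlinarith
        have g2 : A' / D' ≤ -Rf := by nlinarith
        rw [proj_of_ge hRf g1, proj_of_ge hRf g2, sub_self, abs_zero]
        positivity


/-! ### Gaussian lemmas -/

lemma gaussianReal_map_refl (m : ℝ) (v : ℝ≥0) :
    (gaussianReal m v).map (fun x => 2 * m - x) = gaussianReal m v := by
  have hfun : (fun x : ℝ => 2 * m - x) = (fun y : ℝ => y + 2 * m) ∘ (fun x : ℝ => (-1) * x) := by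
    funext x; simp; ring
  rw [hfun, ← Measure.map_map (by fun_prop) (by fun_prop)]
  rw [gaussianReal_map_const_mul (-1)]
  have h1 : (NNReal.mk ((-1:ℝ)^2) (sq_nonneg _)) = 1 := by ext; norm_num [NNReal.mk]; rfl
  rw [h1, one_mul, gaussianReal_map_add_const]
  congr 1
  ring

lemma gaussianReal_apply_symm (m : ℝ) (v : ℝ≥0) {s : Set ℝ} (hs : MeasurableSet s) :
    gaussianReal m v s = gaussianReal m v ((fun x => 2 * m - x) ⁻¹' s) := by
  conv_lhs => rw [← gaussianReal_map_refl m v]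
  rw [Measure.map_apply (by fun_prop) hs]

lemma gaussianReal_Ici_self (m : ℝ) {v : ℝ≥0} (hv : v ≠ 0) :
    gaussianReal m v (Set.Ici m) = 1 / 2 := by
  set P := gaussianReal m v
  have hsing : P {m} = 0 :=
    (gaussianReal_absolutelyContinuous m hv) (measure_singleton m)
  have hIic : P (Set.Iic m) = P (Set.Ici m) := by
    have := gaussianReal_apply_symm m v (measurableSet_Iic (a := m))
    have hpre : (fun x : ℝ => 2 * m - x) ⁻¹' (Set.Iic m) = Set.Ici m := by
      ext x; simp [Set.mem_Iic, Set.mem_Ici]; constructor <;> intro <;> linarith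
    rw [hpre] at this
    exact this
  have hIio : P (Set.Iio m) = P (Set.Iic m) := by
    have h1 : P (Set.Iic m) ≤ P (Set.Iio m) + P {m} := by
      rw [← Set.Iio_union_right]
      exact measure_union_le _ _
    have h2 : P (Set.Iio m) ≤ P (Set.Iic m) := measure_mono Set.Iio_subset_Iic_self
    rw [hsing, add_zero] at h1
    exact le_antisymm h2 h1
  have hsum : P (Set.Iio m) + P (Set.Ici m) = 1 := by
    rw [← measure_union (by exact Set.Iio_disjoint_Ici le_rfl) measurableSet_Ici,
      Set.Iio_union_Ici]
    exact measure_univ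
  rw [hIio, hIic] at hsum
  have h2 : 2 * P (Set.Ici m) = 1 := by rw [two_mul]; exact hsum
  rw [ENNReal.eq_div_iff (by norm_num) (by norm_num)]
  exact h2

lemma gaussian_tail_upper (m : ℝ) {v : ℝ≥0} (hv : v ≠ 0) {t : ℝ} (ht : 0 ≤ t) :
    gaussianReal m v (Set.Ici (m + t)) ≤ ENNReal.ofReal (exp (-t^2 / (2 * (v:ℝ))) / 2) := by
  have hv0 : (0:ℝ) < v := by positivity
  have key : ∀ x ∈ Set.Ici (m + t),
      gaussianPDF m v x ≤ ENNReal.ofReal (exp (-t^2 / (2 * (v:ℝ)))) * gaussianPDF (m + t) v x := by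
    intro x hx
    simp only [Set.mem_Ici] at hx
    unfold gaussianPDF
    rw [← ENNReal.ofReal_mul (by positivity)]
    apply ENNReal.ofReal_le_ofReal
    unfold gaussianPDFReal
    rw [show exp (-t ^ 2 / (2 * (v:ℝ))) * ((√(2 * π * ↑v))⁻¹ * exp (-(x - (m+t)) ^ 2 / (2 * ↑v)))
        = (√(2 * π * ↑v))⁻¹ * (exp (-t ^ 2 / (2 * ↑v)) * exp (-(x - (m+t)) ^ 2 / (2 * ↑v))) by ring]
    apply mul_le_mul_of_nonneg_left _ (by positivity)
    rw [← Real.exp_add]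
    apply Real.exp_le_exp.mpr
    rw [← add_div, div_le_div_iff₀ (by positivity) (by positivity)]
    nlinarith [mul_nonneg ht (by linarith : (0:ℝ) ≤ x - m - t), sq_nonneg (x - m - t)]
  calc gaussianReal m v (Set.Ici (m + t)) = ∫⁻ x in Set.Ici (m + t), gaussianPDF m v x :=
        gaussianReal_apply m hv _
    _ ≤ ∫⁻ x in Set.Ici (m + t),
          ENNReal.ofReal (exp (-t^2 / (2 * (v:ℝ)))) * gaussianPDF (m + t) v x :=
        setLIntegral_mono (Measurable.const_mul (measurable_gaussianPDF _ _) _) key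
    _ = ENNReal.ofReal (exp (-t^2 / (2 * (v:ℝ)))) * ∫⁻ x in Set.Ici (m + t),
          gaussianPDF (m + t) v x := lintegral_const_mul _ (measurable_gaussianPDF _ _)
    _ = ENNReal.ofReal (exp (-t^2 / (2 * (v:ℝ)))) * gaussianReal (m + t) v (Set.Ici (m + t)) := by
        rw [gaussianReal_apply _ hv]
    _ = ENNReal.ofReal (exp (-t^2 / (2 * (v:ℝ)))) * (1/2) := by
        rw [gaussianReal_Ici_self _ hv]
    _ = ENNReal.ofReal (exp (-t^2 / (2 * (v:ℝ))) / 2) := by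
        rw [ENNReal.ofReal_div_of_pos (by norm_num), div_eq_mul_inv, ENNReal.ofReal_ofNat,
          one_div, div_eq_mul_inv]

lemma gaussian_tail_lower (m : ℝ) {v : ℝ≥0} (hv : v ≠ 0) {t : ℝ} (ht : 0 ≤ t) :
    gaussianReal m v (Set.Iic (m - t)) ≤ ENNReal.ofReal (exp (-t^2 / (2 * (v:ℝ))) / 2) := by
  have hsymm := gaussianReal_apply_symm m v (measurableSet_Iic (a := m - t))
  have hpre : (fun x : ℝ => 2 * m - x) ⁻¹' (Set.Iic (m - t)) = Set.Ici (m + t) := by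
    ext x; simp [Set.mem_Iic, Set.mem_Ici]; constructor <;> intro <;> linarith
  rw [hsymm, hpre]
  exact gaussian_tail_upper m hv ht

lemma t_lb {e v a u : ℝ} (he : 0 < e * v) (ha : 0 < a) (hu : 0 < u) (hua : u ≤ a) :
    e * v / (2 * a) - a / 2 ≤ (e * v - u ^ 2) / (2 * u) := by
  have hkey : (e * v - u ^ 2) / (2 * u) - (e * v / (2 * a) - a / 2)
      = (a - u) * (e * v + a * u) / (2 * a * u) := by
    field_simp; ring
  have h2 : 0 ≤ (a - u) * (e * v + a * u) / (2 * a * u) :=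
    div_nonneg (mul_nonneg (by linarith) (by positivity)) (by positivity)
  linarith

set_option maxHeartbeats 1000000 in
/-- The Gaussian mechanism with the ePTR noise scale is `(ε/2, δ)`-indistinguishable. -/
lemma gauss_dp {ε δ α : ℝ} (hε : ε ∈ Set.Ioo (0:ℝ) 1) (hδ : δ ∈ Set.Ioo (0:ℝ) 1) (hα : 0 < α)
    {m m' : ℝ} (hm : |m - m'| ≤ α) (B : Set ℝ) :
    gaussianReal m (Real.toNNReal ((EPTR.noiseSD ε δ α)^2)) B
      ≤ ENNReal.ofReal (exp (ε/2)) * gaussianReal m' (Real.toNNReal ((EPTR.noiseSD ε δ α)^2)) B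
        + ENNReal.ofReal δ := by
  obtain ⟨hε0, hε1⟩ := hε
  obtain ⟨hδ0, hδ1⟩ := hδ
  -- basic facts about L and s
  set L : ℝ := Real.log (1.25 / δ) with hLdef
  have hL8 : 1/8 ≤ L := by
    rw [hLdef, Real.le_log_iff_exp_le (by positivity)]
    have h1 : (1:ℝ) - 1/8 ≤ exp (-(1/8)) := by
      have := Real.add_one_le_exp (-(1/8) : ℝ); linarith
    have h2 : exp (1/8 : ℝ) ≤ 8/7 := by
      rw [show (1/8 : ℝ) = -(-(1/8)) by ring, Real.exp_neg]
      rw [inv_le_comm₀ (exp_pos _) (by norm_num)]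
      linarith
    have h3 : (1.25 : ℝ) ≤ 1.25 / δ := by
      rw [le_div_iff₀ (by positivity)]; nlinarith
    linarith
  have hL0 : 0 < L := by linarith
  set s : ℝ := EPTR.noiseSD ε δ α with hsdef
  have hs_eq : s = 2 * α / ε * Real.sqrt (2 * L) := rfl
  have hsqrt : Real.sqrt (2*L) ^ 2 = 2 * L := Real.sq_sqrt (by linarith)
  have hs0 : 0 < s := by
    rw [hs_eq]; positivity
  set V : ℝ≥0 := Real.toNNReal (s^2) with hVdef
  have hVco : (V : ℝ) = s^2 := Real.coe_toNNReal _ (sq_nonneg s)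
  have hv0 : (0:ℝ) < V := by rw [hVco]; positivity
  have hVne : V ≠ 0 := by
    intro h; rw [h] at hv0; simp at hv0
  have hveq : (V:ℝ) = 8 * α^2 * L / ε^2 := by
    rw [hVco, hs_eq, mul_pow, hsqrt]
    field_simp
    ring
  by_cases hmm : m = m'
  · subst hmm
    calc gaussianReal m V B = 1 * gaussianReal m V B := (one_mul _).symm
      _ ≤ ENNReal.ofReal (exp (ε/2)) * gaussianReal m V B := by
          gcongr
          exact ENNReal.one_le_ofReal.mpr (Real.one_le_exp (by positivity))
      _ ≤ _ := le_self_add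
  -- main case
  set Δ : ℝ := m - m' with hΔdef
  have hΔne : Δ ≠ 0 := sub_ne_zero.mpr hmm
  have hΔabs : |Δ| ≤ α := hm
  have hΔpos : 0 < |Δ| := abs_pos.mpr hΔne
  set G : Set ℝ := {x | 2 * (x - m) * Δ + Δ^2 ≤ ε * (V:ℝ)} with hGdef
  have hGmeas : MeasurableSet G := by
    apply measurableSet_le (by fun_prop) (by fun_prop)
  -- pointwise density bound on G
  have hpdf : ∀ x ∈ G, gaussianPDF m V x ≤ ENNReal.ofReal (exp (ε/2)) * gaussianPDF m' V x := by
    intro x hx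
    have hxG : 2 * (x - m) * Δ + Δ^2 ≤ ε * (V:ℝ) := hx
    unfold gaussianPDF
    rw [← ENNReal.ofReal_mul (by positivity)]
    apply ENNReal.ofReal_le_ofReal
    unfold gaussianPDFReal
    rw [show exp (ε/2) * ((√(2 * π * ↑V))⁻¹ * exp (-(x - m') ^ 2 / (2 * ↑V)))
        = (√(2 * π * ↑V))⁻¹ * (exp (ε/2) * exp (-(x - m') ^ 2 / (2 * ↑V))) by ring]
    apply mul_le_mul_of_nonneg_left _ (by positivity)
    rw [← Real.exp_add]
    apply Real.exp_le_exp.mpr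
    have hm' : m' = m - Δ := by rw [hΔdef]; ring
    have hkey : ε/2 + (-(x - m') ^ 2 / (2 * (V:ℝ))) - (-(x - m) ^ 2 / (2 * (V:ℝ)))
        = (ε * (V:ℝ) - (2 * (x - m) * Δ + Δ^2)) / (2 * (V:ℝ)) := by
      rw [hm']; field_simp; ring
    have hposq : 0 ≤ (ε * (V:ℝ) - (2 * (x - m) * Δ + Δ^2)) / (2 * (V:ℝ)) :=
      div_nonneg (by linarith) (by positivity)
    linarith
  -- bad set bound
  set t : ℝ := (ε * (V:ℝ) - Δ^2) / (2 * |Δ|) with htdef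
  have ht0' : ε * (V:ℝ) / (2*α) - α/2 ≤ t := by
    have h := t_lb (mul_pos hε0 hv0) hα hΔpos hΔabs
    rw [sq_abs] at h
    exact h
  have ht00 : 0 ≤ ε * (V:ℝ) / (2*α) - α/2 := by
    rw [hveq]
    have : ε * (8 * α^2 * L / ε^2) / (2*α) = 4 * α * L / ε := by
      field_simp; ring
    rw [this]
    rw [sub_nonneg, div_le_div_iff₀ (by norm_num) (by positivity)]
    nlinarith
  have ht0 : 0 ≤ t := le_trans ht00 ht0'
  have hbadmeas : gaussianReal m V Gᶜ ≤ ENNReal.ofReal (exp (-t^2 / (2*(V:ℝ))) / 2) := by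
    rcases lt_or_gt_of_ne hΔne with hΔneg | hΔpos'
    · -- Δ < 0 : bad set is a lower tail
      have hsub : Gᶜ ⊆ Set.Iic (m - t) := by
        intro x hx
        simp only [Set.mem_compl_iff, hGdef, Set.mem_setOf_eq, not_le] at hx
        simp only [Set.mem_Iic]
        have habs : |Δ| = -Δ := abs_of_neg hΔneg
        have : 2 * t * |Δ| = ε * (V:ℝ) - Δ^2 := by
          rw [htdef]; field_simp
        -- 2(x-m)Δ > εV - Δ² = 2t|Δ| = -2tΔ  ⇒ x - m < -t
        have h2 : 2 * (x - m) * Δ > -(2 * t * Δ) := by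
          rw [show -(2*t*Δ) = 2*t*|Δ| by rw [habs]; ring, this]; linarith
        nlinarith
      calc gaussianReal m V Gᶜ ≤ gaussianReal m V (Set.Iic (m - t)) := measure_mono hsub
        _ ≤ _ := gaussian_tail_lower m hVne ht0
    · -- Δ > 0 : bad set is an upper tail
      have hsub : Gᶜ ⊆ Set.Ici (m + t) := by
        intro x hx
        simp only [Set.mem_compl_iff, hGdef, Set.mem_setOf_eq, not_le] at hx
        simp only [Set.mem_Ici]
        have habs : |Δ| = Δ := abs_of_pos hΔpos'
        have : 2 * t * |Δ| = ε * (V:ℝ) - Δ^2 := by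
          rw [htdef]; field_simp
        have h2 : 2 * (x - m) * Δ > 2 * t * Δ := by
          rw [show 2*t*Δ = 2*t*|Δ| by rw [habs], this]; linarith
        nlinarith
      calc gaussianReal m V Gᶜ ≤ gaussianReal m V (Set.Ici (m + t)) := measure_mono hsub
        _ ≤ _ := gaussian_tail_upper m hVne ht0
  -- numeric bound on the tail
  have hnum : exp (-t^2 / (2*(V:ℝ))) / 2 ≤ δ := by
    have hts : t^2 / (2*(V:ℝ)) ≥ L - ε/4 := by
      rw [ge_iff_le, le_div_iff₀ (by positivity)]
      have ht2 : (ε * (V:ℝ) / (2*α) - α/2)^2 ≤ t^2 := by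
        nlinarith [ht00, ht0', ht0]
      have hid : (ε * (V:ℝ) / (2*α) - α/2)^2 = (L - ε/4) * (2*(V:ℝ)) + α^2/4 := by
        rw [hveq]; field_simp; ring
      nlinarith [sq_nonneg α]
    have h1 : exp (-t^2 / (2*(V:ℝ))) ≤ exp (ε/4 - L) := by
      apply Real.exp_le_exp.mpr; rw [neg_div]; linarith
    have h2 : exp (ε/4 - L) = exp (ε/4) * (δ / 1.25) := by
      rw [Real.exp_sub, hLdef, Real.exp_log (by positivity)]
      field_simp
    have h3 : exp (ε/4 : ℝ) ≤ 4/3 := by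
      have ha : (1:ℝ) - 1/4 ≤ exp (-(1/4)) := by
        have := Real.add_one_le_exp (-(1/4) : ℝ); linarith
      have hb : exp (ε/4) ≤ exp (1/4 : ℝ) := Real.exp_le_exp.mpr (by linarith)
      have hc : exp (1/4 : ℝ) ≤ 4/3 := by
        rw [show (1/4 : ℝ) = -(-(1/4)) by ring, Real.exp_neg]
        rw [inv_le_comm₀ (exp_pos _) (by norm_num)]
        linarith
      linarith
    have h4 : exp (ε/4) * (δ / 1.25) ≤ (4/3) * (δ/1.25) := by
      apply mul_le_mul_of_nonneg_right h3 (by positivity)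
    have h5 := h1.trans (h2.le.trans h4)
    have h6 : (4/3 : ℝ) * (δ/1.25) = (16/15) * δ := by ring
    linarith
  -- assemble
  calc gaussianReal m V B ≤ gaussianReal m V (B ∩ G) + gaussianReal m V Gᶜ := by
        refine le_trans (measure_mono ?_) (measure_union_le _ _)
        intro x hx
        by_cases hxG : x ∈ G
        · exact Or.inl ⟨hx, hxG⟩
        · exact Or.inr hxG
    _ ≤ ENNReal.ofReal (exp (ε/2)) * gaussianReal m' V B + ENNReal.ofReal δ := by
        apply add_le_add
        · calc gaussianReal m V (B ∩ G) = ∫⁻ x in B ∩ G, gaussianPDF m V x :=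
              gaussianReal_apply m hVne _
            _ ≤ ∫⁻ x in B ∩ G, ENNReal.ofReal (exp (ε/2)) * gaussianPDF m' V x :=
              setLIntegral_mono (Measurable.const_mul (measurable_gaussianPDF _ _) _)
                (fun x hx => hpdf x hx.2)
            _ = ENNReal.ofReal (exp (ε/2)) * ∫⁻ x in B ∩ G, gaussianPDF m' V x :=
              lintegral_const_mul _ (measurable_gaussianPDF _ _)
            _ = ENNReal.ofReal (exp (ε/2)) * gaussianReal m' V (B ∩ G) := by
              rw [gaussianReal_apply _ hVne]
            _ ≤ ENNReal.ofReal (exp (ε/2)) * gaussianReal m' V B := by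
              gcongr
              exact Set.inter_subset_left
        · exact le_trans hbadmeas (ENNReal.ofReal_le_ofReal hnum)

/-! ### ENNReal assembly lemmas -/

lemma dp_zero {p ε δ : ℝ} (hp : 0 ≤ p) (hpδ : p ≤ δ) (hε : 0 ≤ ε)
    {Ω : Type*} [MeasurableSpace Ω]
    (N N' pm : Measure Ω) [IsProbabilityMeasure N] (B : Set Ω) :
    ENNReal.ofReal p * N B + ENNReal.ofReal (1-p) * pm B
      ≤ ENNReal.ofReal (exp ε) * (ENNReal.ofReal p * N' B + ENNReal.ofReal (1-p) * pm B)
        + ENNReal.ofReal δ := by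
  have e1 : ENNReal.ofReal p * N B ≤ ENNReal.ofReal δ := by
    calc ENNReal.ofReal p * N B ≤ ENNReal.ofReal p * 1 := by
          gcongr; exact prob_le_one
      _ = ENNReal.ofReal p := mul_one _
      _ ≤ ENNReal.ofReal δ := ENNReal.ofReal_le_ofReal hpδ
  have e2 : ENNReal.ofReal (1-p) * pm B
      ≤ ENNReal.ofReal (exp ε) * (ENNReal.ofReal p * N' B + ENNReal.ofReal (1-p) * pm B) := by
    calc ENNReal.ofReal (1-p) * pm B ≤ ENNReal.ofReal p * N' B + ENNReal.ofReal (1-p) * pm B :=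
          le_add_self
      _ = 1 * (ENNReal.ofReal p * N' B + ENNReal.ofReal (1-p) * pm B) := (one_mul _).symm
      _ ≤ ENNReal.ofReal (exp ε) * (ENNReal.ofReal p * N' B + ENNReal.ofReal (1-p) * pm B) := by
          gcongr
          exact ENNReal.one_le_ofReal.mpr (Real.one_le_exp hε)
  calc ENNReal.ofReal p * N B + ENNReal.ofReal (1-p) * pm B
      ≤ ENNReal.ofReal δ
        + ENNReal.ofReal (exp ε) * (ENNReal.ofReal p * N' B + ENNReal.ofReal (1-p) * pm B) :=
        add_le_add e1 e2
    _ = _ := add_comm _ _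

lemma dp_core {p p' ε δ : ℝ} (hp : 0 ≤ p) (hp1 : p ≤ 1) (hp'0 : 0 ≤ p') (hp1' : p' ≤ 1)
    (hε : 0 ≤ ε)
    {Ω : Type*} [MeasurableSpace Ω]
    (N N' pm : Measure Ω) (B : Set Ω)
    (hNB : N B ≤ ENNReal.ofReal (exp (ε/2)) * N' B + ENNReal.ofReal δ)
    (hpp : p ≤ exp (ε/2) * p') (hqq : 1 - p ≤ exp (ε/2) * (1 - p')) :
    ENNReal.ofReal p * N B + ENNReal.ofReal (1-p) * pm B
      ≤ ENNReal.ofReal (exp ε) * (ENNReal.ofReal p' * N' B + ENNReal.ofReal (1-p') * pm B)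
        + ENNReal.ofReal δ := by
  have hexp : exp ε = exp (ε/2) * exp (ε/2) := by
    rw [← Real.exp_add]; ring_nf
  have e1 : ENNReal.ofReal p * N B
      ≤ ENNReal.ofReal p * (ENNReal.ofReal (exp (ε/2)) * N' B)
        + ENNReal.ofReal p * ENNReal.ofReal δ := by
    calc ENNReal.ofReal p * N B
        ≤ ENNReal.ofReal p * (ENNReal.ofReal (exp (ε/2)) * N' B + ENNReal.ofReal δ) :=
          mul_le_mul_right hNB _
      _ = _ := mul_add _ _ _
  have e2 : ENNReal.ofReal p * (ENNReal.ofReal (exp (ε/2)) * N' B)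
      ≤ ENNReal.ofReal (exp ε) * (ENNReal.ofReal p' * N' B) := by
    rw [← mul_assoc, ← mul_assoc]
    apply mul_le_mul_left
    rw [← ENNReal.ofReal_mul hp, ← ENNReal.ofReal_mul (exp_nonneg _)]
    apply ENNReal.ofReal_le_ofReal
    rw [hexp]
    nlinarith [exp_pos (ε/2)]
  have e3 : ENNReal.ofReal p * ENNReal.ofReal δ ≤ ENNReal.ofReal δ := by
    calc ENNReal.ofReal p * ENNReal.ofReal δ ≤ 1 * ENNReal.ofReal δ :=
          mul_le_mul_left (ENNReal.ofReal_le_one.mpr hp1) _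
      _ = _ := one_mul _
  have e4 : ENNReal.ofReal (1-p) * pm B
      ≤ ENNReal.ofReal (exp ε) * (ENNReal.ofReal (1-p') * pm B) := by
    rw [← mul_assoc, ← ENNReal.ofReal_mul (exp_nonneg _)]
    apply mul_le_mul_left
    apply ENNReal.ofReal_le_ofReal
    have h1p' : 0 ≤ 1 - p' := by linarith
    have hee : exp (ε/2) ≤ exp ε := exp_le_exp.mpr (by linarith)
    nlinarith [exp_pos (ε/2)]
  calc ENNReal.ofReal p * N B + ENNReal.ofReal (1-p) * pm B
      ≤ (ENNReal.ofReal (exp ε) * (ENNReal.ofReal p' * N' B) + ENNReal.ofReal δ)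
        + ENNReal.ofReal (exp ε) * (ENNReal.ofReal (1-p') * pm B) :=
        add_le_add (e1.trans (add_le_add e2 e3)) e4
    _ = _ := by ring


end EPTRAux


/-- Theorem 5.1 (the ePTR Nadaraya–Watson mechanism is DP): over datasets in
`Z = ℝ^d × [-R_f, R_f]`, the ePTR mechanism with the clipped NW estimator, sub-distance
`γ(X) = (σ^d/(2C_K)) max(d_σ(x₀, X) - c₀n - 2σ^{-d}C_K, 0)` and sensitivity level
`α = 8R_fC_K/(σ^d c₀ n)` is `(ε, δ)`-differentially private. -/
theorem nw_ePTR_isDP {d n : ℕ} (hd : 1 ≤ d) (hn : 1 ≤ n)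
    {σ CK Rf c0 ε δ : ℝ} (hσ : 0 < σ) (hCK : 0 < CK) (hRf : 0 < Rf) (hc0 : 0 < c0)
    (hε : ε ∈ Set.Ioo (0 : ℝ) 1) (hδ : δ ∈ Set.Ioo (0 : ℝ) 1)
    (x0 : EuclideanSpace ℝ (Fin d))
    (Kσ : EuclideanSpace ℝ (Fin d) → EuclideanSpace ℝ (Fin d) → ℝ)
    (hKmeas : Measurable fun z : EuclideanSpace ℝ (Fin d) × EuclideanSpace ℝ (Fin d) =>
      Kσ z.1 z.2)
    (hKb : ∀ x x', |Kσ x x'| ≤ σ ^ (-(d : ℤ)) * CK)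
    (πbot : Measure ℝ) [IsProbabilityMeasure πbot] :
    EPTR.IsDP (n := n)
      (Z := EuclideanSpace ℝ (Fin d) × {y : ℝ // y ∈ Set.Icc (-Rf) Rf})
      (EPTR.ePTR1 ε δ (8 * Rf * CK / (σ ^ d * c0 * n))
        (fun X =>
          if (∑ j, Kσ x0 (X j).1) ≠ 0 then
            EPTR.proj Rf ((∑ j, Kσ x0 (X j).1 * ((X j).2 : ℝ)) / ∑ j, Kσ x0 (X j).1)
          else 0)
        (fun X =>
          σ ^ d / (2 * CK) *
            max ((∑ j, Kσ x0 (X j).1) - c0 * n - 2 * σ ^ (-(d : ℤ)) * CK) 0)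
        πbot) ε δ := by
  obtain ⟨hε0, hε1⟩ := hε
  obtain ⟨hδ0, hδ1⟩ := hδ
  intro X X' hN B hB
  -- neighbor structure
  rw [EPTR.Neighbor, EPTR.hDist, Finset.card_eq_one] at hN
  obtain ⟨i0, hi0⟩ := hN
  have hagree : ∀ j, j ≠ i0 → X j = X' j := by
    intro j hj
    by_contra hne
    have hmem : j ∈ ({i0} : Finset (Fin n)) := by
      rw [← hi0]
      simp only [Finset.mem_filter, Finset.mem_univ, true_and]
      exact hne
    exact hj (Finset.mem_singleton.mp hmem)
  -- basic positivity
  have hσd : (0:ℝ) < σ ^ d := pow_pos hσ d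
  have hσdi : (0:ℝ) < σ ^ (-(d:ℤ)) := zpow_pos hσ _
  have hσdinv : σ ^ (-(d:ℤ)) = (σ ^ d)⁻¹ := by
    rw [_root_.zpow_neg, zpow_natCast]
  have hnR : (0:ℝ) < (n:ℝ) := by
    have : (0:ℕ) < n := lt_of_lt_of_le Nat.zero_lt_one hn
    exact_mod_cast this
  set b : ℝ := 2 * σ ^ (-(d:ℤ)) * CK with hbdef
  have hb : 0 < b := by rw [hbdef]; positivity
  set c : ℝ := c0 * (n:ℝ) with hcdef
  have hc : 0 < c := mul_pos hc0 hnR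
  set α : ℝ := 8 * Rf * CK / (σ ^ d * c0 * n) with hαdef
  have hα : 0 < α := by
    rw [hαdef]
    exact div_pos (by positivity) (by positivity)
  set D : ℝ := ∑ j, Kσ x0 (X j).1 with hDdef
  set D' : ℝ := ∑ j, Kσ x0 (X' j).1 with hD'def
  set A : ℝ := ∑ j, Kσ x0 (X j).1 * ((X j).2 : ℝ) with hAdef
  set A' : ℝ := ∑ j, Kσ x0 (X' j).1 * ((X' j).2 : ℝ) with hA'def
  -- sensitivity of the sums
  have hDD' : |D - D'| ≤ b := by
    have hsum : D - D' = Kσ x0 (X i0).1 - Kσ x0 (X' i0).1 := by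
      rw [hDdef, hD'def, ← Finset.sum_sub_distrib]
      exact Finset.sum_eq_single i0
        (fun j _ hj => by rw [hagree j hj, sub_self])
        (fun h => absurd (Finset.mem_univ i0) h)
    rw [hsum]
    calc |Kσ x0 (X i0).1 - Kσ x0 (X' i0).1|
        ≤ |Kσ x0 (X i0).1| + |Kσ x0 (X' i0).1| := abs_sub _ _
      _ ≤ σ ^ (-(d:ℤ)) * CK + σ ^ (-(d:ℤ)) * CK := add_le_add (hKb _ _) (hKb _ _)
      _ = b := by rw [hbdef]; ring
  have hterm : ∀ z : EuclideanSpace ℝ (Fin d) × {y : ℝ // y ∈ Set.Icc (-Rf) Rf},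
      |Kσ x0 z.1 * (z.2 : ℝ)| ≤ σ ^ (-(d:ℤ)) * CK * Rf := by
    intro z
    rw [abs_mul]
    apply mul_le_mul (hKb _ _) _ (abs_nonneg _) (by positivity)
    have hz := z.2.2
    rw [Set.mem_Icc] at hz
    exact abs_le.mpr hz
  have hAA' : |A - A'| ≤ Rf * b := by
    have hsum : A - A' = Kσ x0 (X i0).1 * ((X i0).2 : ℝ) - Kσ x0 (X' i0).1 * ((X' i0).2 : ℝ) := by
      rw [hAdef, hA'def, ← Finset.sum_sub_distrib]
      exact Finset.sum_eq_single i0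
        (fun j _ hj => by rw [hagree j hj, sub_self])
        (fun h => absurd (Finset.mem_univ i0) h)
    rw [hsum]
    calc |Kσ x0 (X i0).1 * ((X i0).2 : ℝ) - Kσ x0 (X' i0).1 * ((X' i0).2 : ℝ)|
        ≤ |Kσ x0 (X i0).1 * ((X i0).2 : ℝ)| + |Kσ x0 (X' i0).1 * ((X' i0).2 : ℝ)| := abs_sub _ _
      _ ≤ σ ^ (-(d:ℤ)) * CK * Rf + σ ^ (-(d:ℤ)) * CK * Rf :=
          add_le_add (hterm _) (hterm _)
      _ = Rf * b := by rw [hbdef]; ring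
  -- gamma sensitivity
  have hc1 : (0:ℝ) < σ ^ d / (2 * CK) := by positivity
  have hc1b : σ ^ d / (2 * CK) * b = 1 := by
    rw [hbdef, hσdinv]
    field_simp
  have hγ1 : |σ ^ d / (2 * CK) * max (D - c - b) 0
      - σ ^ d / (2 * CK) * max (D' - c - b) 0| ≤ 1 := by
    rw [← mul_sub, abs_mul, abs_of_pos hc1]
    calc σ ^ d / (2 * CK) * |max (D - c - b) 0 - max (D' - c - b) 0|
        ≤ σ ^ d / (2 * CK) * |(D - c - b) - (D' - c - b)| := by
          apply mul_le_mul_of_nonneg_left (abs_max_sub_max_le_abs _ _ _) hc1.le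
      _ = σ ^ d / (2 * CK) * |D - D'| := by ring_nf
      _ ≤ σ ^ d / (2 * CK) * b := mul_le_mul_of_nonneg_left hDD' hc1.le
      _ = 1 := hc1b
  -- unfold the mechanism
  simp only [EPTR.ePTR1, Measure.add_apply, Measure.smul_apply, smul_eq_mul]
  rw [← hDdef, ← hD'def, ← hAdef, ← hA'def]
  by_cases hcase : D ≤ c + b ∧ D' ≤ c + b
  · -- both sub-distances are zero
    have hgX : σ ^ d / (2 * CK) * max (D - c - b) 0 = 0 := by
      rw [max_eq_right (by linarith [hcase.1])]; ring
    have hgX' : σ ^ d / (2 * CK) * max (D' - c - b) 0 = 0 := by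
      rw [max_eq_right (by linarith [hcase.2])]; ring
    rw [hgX, hgX']
    exact EPTRAux.dp_zero (EPTRAux.relProb_nonneg _ _ _)
      (EPTRAux.relProb_zero_le ⟨hε0, hε1⟩ ⟨hδ0, hδ1⟩) hε0.le _ _ _ _
  · -- at least one sub-distance is positive
    rw [not_and_or, not_le, not_le] at hcase
    have habs := abs_le.mp hDD'
    have hkey : 0 < D ∧ 0 < D' ∧ |EPTR.proj Rf (A/D) - EPTR.proj Rf (A'/D')| ≤ 4*Rf*b/c := by
      rcases hcase with h1 | h1
      · exact ⟨by linarith, by linarith, EPTRAux.nw_sens hRf hb hc hAA' hDD' h1.le⟩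
      · have hAA'' : |A' - A| ≤ Rf * b := by rwa [abs_sub_comm] at hAA'
        have hDD'' : |D' - D| ≤ b := by rwa [abs_sub_comm] at hDD'
        refine ⟨by linarith [abs_le.mp hDD''], by linarith, ?_⟩
        rw [abs_sub_comm]
        exact EPTRAux.nw_sens hRf hb hc hAA'' hDD'' h1.le
    obtain ⟨hD0, hD'0, hsens⟩ := hkey
    rw [if_pos hD0.ne', if_pos hD'0.ne']
    have hα4 : 4 * Rf * b / c = α := by
      rw [hαdef, hbdef, hcdef, hσdinv]
      field_simp
      ring
    rw [hα4] at hsens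
    have hγr := abs_le.mp hγ1
    exact EPTRAux.dp_core (EPTRAux.relProb_nonneg _ _ _) (EPTRAux.relProb_le_one _ _ _)
      (EPTRAux.relProb_nonneg _ _ _) (EPTRAux.relProb_le_one _ _ _) hε0.le _ _ _ _
      (EPTRAux.gauss_dp ⟨hε0, hε1⟩ ⟨hδ0, hδ1⟩ hα hsens B)
      (EPTRAux.relProb_le_mul hε0.le hγr.2)
      (EPTRAux.one_sub_relProb_le_mul hε0.le (by linarith [hγr.1]))
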